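/- Let α_n(x) = (p_n(x), q_n(x)) where for k ≥ 0, α_{2k}(x) = (G_{2k}(x,x), F_{2k}(x,x)) and α_{2k+1}(x) = (F_{2k+1}(x,x), G_{2k+1}(x,x)), with F_n and G_n the alternating iterated Stieltjes integrals associated to a strictly increasing càdlàg W and strictly increasing càglàd V on [0,1] (F₀=G₀=1, F₁(x,x)=W(x), G₁(x,x)=V(x)). Then for every n ≥ 1 and every x, Σ_{j=0}^{2n} (−1)^j q_j(x) p_{2n−j}(x) = 0. -/

import Mathlib

open MeasureTheory Set

private lemma sum_pair' (g : ℕ → ℝ) : ∀ m : ℕ, ∑ i ∈ Finset.range (2*m), g i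
    = ∑ p ∈ Finset.range m, (g (2*p) + g (2*p+1)) := by
  intro m
  induction m with
  | zero => simp
  | succ m ih =>
    rw [Finset.sum_range_succ, ← ih, show 2*(m+1) = 2*m+1+1 by ring,
      Finset.sum_range_succ, Finset.sum_range_succ, add_assoc]

private lemma comb (f B : ℕ → ℝ) (m : ℕ) (h0 : f 0 = B 0)
    (hpair : ∀ p < m, f (2*p+1) + f (2*p+2) = B (p+1) - B p)
    (hlast : f (2*m+1) + f (2*m+2) = -(B m)) :
    ∑ j ∈ Finset.range (2*m+3), f j = 0 := by
  have e1 : ∑ j ∈ Finset.range (2*m+3), f j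
      = (∑ j ∈ Finset.range (2*m+1), f j) + f (2*m+1) + f (2*m+2) := by
    rw [show 2*m+3 = (2*m+1)+1+1 by ring, Finset.sum_range_succ, Finset.sum_range_succ]
  have e2 : ∑ j ∈ Finset.range (2*m+1), f j
      = (∑ i ∈ Finset.range (2*m), f (i+1)) + f 0 := Finset.sum_range_succ' f (2*m)
  have e3 : ∑ i ∈ Finset.range (2*m), f (i+1)
      = ∑ p ∈ Finset.range m, (f (2*p+1) + f (2*p+2)) := by
    rw [sum_pair' (fun i => f (i+1)) m]
  have e4 : ∑ p ∈ Finset.range m, (f (2*p+1) + f (2*p+2)) = B m - B 0 := by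
    rw [Finset.sum_congr rfl (fun p hp => hpair p (Finset.mem_range.mp hp))]
    exact Finset.sum_range_sub B m
  rw [e1, e2, e3, e4]
  linarith [h0, hlast]

private lemma reg (W : StieltjesFunction ℝ) (μV : Measure ℝ) [IsFiniteMeasure μV]
    (F G : ℕ → ℝ → ℝ)
    (hF0 : ∀ x, F 0 x = 1) (hG0 : ∀ x, G 0 x = 1)
    (hF : ∀ (n : ℕ) (x : ℝ), F (n+1) x = ∫ ξ in Set.Ioc (0:ℝ) x, G n ξ ∂W.measure)
    (hG : ∀ (n : ℕ) (x : ℝ), G (n+1) x = ∫ ξ in Set.Ico (0:ℝ) x, F n ξ ∂μV) :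
    ∀ n : ℕ, Measurable (F n) ∧ Measurable (G n) ∧ (∀ x, 0 ≤ F n x) ∧ (∀ x, 0 ≤ G n x) ∧
      ∀ M : ℝ, ∃ C : ℝ, 0 ≤ C ∧ ∀ x ∈ Icc (0:ℝ) M, F n x ≤ C ∧ G n x ≤ C := by
  intro n
  induction n with
  | zero =>
    have hFe : F 0 = fun _ => (1:ℝ) := funext hF0
    have hGe : G 0 = fun _ => (1:ℝ) := funext hG0
    exact ⟨hFe ▸ measurable_const, hGe ▸ measurable_const,
      fun x => by rw [hF0]; norm_num, fun x => by rw [hG0]; norm_num,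
      fun M => ⟨1, by norm_num, fun x _ => by rw [hF0, hG0]; norm_num⟩⟩
  | succ n ih =>
    obtain ⟨mF, mG, nnF, nnG, bdd⟩ := ih
    have hWfin : ∀ y : ℝ, W.measure (Ioc 0 y) < ⊤ := fun y => by
      rw [W.measure_Ioc]; exact ENNReal.ofReal_lt_top
    have intG : ∀ y : ℝ, IntegrableOn (G n) (Ioc 0 y) W.measure := by
      intro y
      obtain ⟨C, hC0, hC⟩ := bdd y
      refine Integrable.mono' (g := fun _ => C) ((integrableOn_const_iff (C := C)).2 (Or.inr (hWfin y)))
        mG.aestronglyMeasurable ?_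
      filter_upwards [ae_restrict_mem measurableSet_Ioc] with ξ hξ
      rw [Real.norm_eq_abs, abs_of_nonneg (nnG ξ)]
      exact (hC ξ ⟨hξ.1.le, hξ.2⟩).2
    have intF : ∀ y : ℝ, IntegrableOn (F n) (Ico 0 y) μV := by
      intro y
      obtain ⟨C, hC0, hC⟩ := bdd y
      refine Integrable.mono' (g := fun _ => C) ((integrableOn_const_iff (C := C)).2 (Or.inr (measure_lt_top μV _)))
        mF.aestronglyMeasurable ?_
      filter_upwards [ae_restrict_mem measurableSet_Ico] with ξ hξ
      rw [Real.norm_eq_abs, abs_of_nonneg (nnF ξ)]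
      exact (hC ξ ⟨hξ.1, hξ.2.le⟩).1
    have monoF : Monotone (F (n+1)) := by
      intro a b hab
      rw [hF, hF]
      exact setIntegral_mono_set (intG b) (ae_of_all _ nnG)
        (HasSubset.Subset.eventuallyLE (Ioc_subset_Ioc_right hab))
    have monoG : Monotone (G (n+1)) := by
      intro a b hab
      rw [hG, hG]
      exact setIntegral_mono_set (intF b) (ae_of_all _ nnF)
        (HasSubset.Subset.eventuallyLE (Ico_subset_Ico_right hab))
    refine ⟨monoF.measurable, monoG.measurable,
      fun x => by rw [hF]; exact setIntegral_nonneg measurableSet_Ioc fun ξ _ => nnG ξ,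
      fun x => by rw [hG]; exact setIntegral_nonneg measurableSet_Ico fun ξ _ => nnF ξ, ?_⟩
    intro M
    obtain ⟨C, hC0, hC⟩ := bdd M
    refine ⟨max (C * (W.measure (Ioc 0 M)).toReal) (C * (μV (Ico 0 M)).toReal),
      le_max_of_le_left (mul_nonneg hC0 ENNReal.toReal_nonneg), fun x hx => ⟨?_, ?_⟩⟩
    · refine le_trans (le_abs_self _) (le_max_of_le_left ?_)
      rw [hF, ← Real.norm_eq_abs]
      calc ‖∫ ξ in Ioc (0:ℝ) x, G n ξ ∂W.measure‖
          ≤ C * (W.measure (Ioc 0 x)).toReal := by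
            refine norm_setIntegral_le_of_norm_le_const (hWfin x) (fun ξ hξ => ?_)
            rw [Real.norm_eq_abs, abs_of_nonneg (nnG ξ)]
            exact (hC ξ ⟨hξ.1.le, hξ.2.trans hx.2⟩).2
        _ ≤ C * (W.measure (Ioc 0 M)).toReal := by
            refine mul_le_mul_of_nonneg_left ?_ hC0
            exact ENNReal.toReal_mono (hWfin M).ne (measure_mono (Ioc_subset_Ioc_right hx.2))
    · refine le_trans (le_abs_self _) (le_max_of_le_right ?_)
      rw [hG, ← Real.norm_eq_abs]
      calc ‖∫ ξ in Ico (0:ℝ) x, F n ξ ∂μV‖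
          ≤ C * (μV (Ico 0 x)).toReal := by
            refine norm_setIntegral_le_of_norm_le_const (measure_lt_top μV _) (fun ξ hξ => ?_)
            rw [Real.norm_eq_abs, abs_of_nonneg (nnF ξ)]
            exact (hC ξ ⟨hξ.1, hξ.2.le.trans hx.2⟩).1
        _ ≤ C * (μV (Ico 0 M)).toReal := by
            refine mul_le_mul_of_nonneg_left ?_ hC0
            exact ENNReal.toReal_mono (measure_lt_top μV _).ne
              (measure_mono (Ico_subset_Ico_right hx.2))

private lemma ibp (W : StieltjesFunction ℝ) (μV : Measure ℝ) [IsFiniteMeasure μV]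
    (F G : ℕ → ℝ → ℝ)
    (hF : ∀ (n : ℕ) (x : ℝ), F (n+1) x = ∫ ξ in Set.Ioc (0:ℝ) x, G n ξ ∂W.measure)
    (hG : ∀ (n : ℕ) (x : ℝ), G (n+1) x = ∫ ξ in Set.Ico (0:ℝ) x, F n ξ ∂μV)
    (k m : ℕ) (x : ℝ) (mGk : Measurable (G k)) (mFm : Measurable (F m))
    (hGk : IntegrableOn (G k) (Ioc 0 x) W.measure)
    (hFm : IntegrableOn (F m) (Ico 0 x) μV) :
    F (k+1) x * G (m+1) x
      = (∫ s in Ioc (0:ℝ) x, G (m+1) s * G k s ∂W.measure)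
        + ∫ t in Ico (0:ℝ) x, F (k+1) t * F m t ∂μV := by
  set ρ := W.measure.restrict (Ioc (0:ℝ) x) with hρ
  set σ := μV.restrict (Ico (0:ℝ) x) with hσ
  haveI : IsFiniteMeasure ρ := ⟨by
    rw [hρ, Measure.restrict_apply_univ, W.measure_Ioc]; exact ENNReal.ofReal_lt_top⟩
  haveI : IsFiniteMeasure σ := ⟨by
    rw [hσ, Measure.restrict_apply_univ]; exact measure_lt_top μV _⟩
  set ψ : ℝ × ℝ → ℝ := fun p => if p.1 ≤ p.2 then G k p.1 * F m p.2 else 0 with hψ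
  set χ : ℝ × ℝ → ℝ := fun p => if p.1 ≤ p.2 then 0 else G k p.1 * F m p.2 with hχ
  have mprod : Measurable fun p : ℝ × ℝ => G k p.1 * F m p.2 :=
    (mGk.comp measurable_fst).mul (mFm.comp measurable_snd)
  have mle : MeasurableSet {p : ℝ × ℝ | p.1 ≤ p.2} :=
    measurableSet_le measurable_fst measurable_snd
  have mψ : Measurable ψ := Measurable.ite mle mprod measurable_const
  have mχ : Measurable χ := Measurable.ite mle measurable_const mprod
  have hbound : Integrable (fun p : ℝ × ℝ => |G k p.1| * |F m p.2|) (ρ.prod σ) :=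
    hGk.abs.mul_prod hFm.abs
  have intψ : Integrable ψ (ρ.prod σ) := by
    refine Integrable.mono' hbound mψ.aestronglyMeasurable (ae_of_all _ fun p => ?_)
    by_cases h : p.1 ≤ p.2
    · simp only [hψ, if_pos h, Real.norm_eq_abs, abs_mul]; exact le_rfl
    · simp only [hψ, if_neg h, norm_zero]; exact mul_nonneg (abs_nonneg _) (abs_nonneg _)
  have intχ : Integrable χ (ρ.prod σ) := by
    refine Integrable.mono' hbound mχ.aestronglyMeasurable (ae_of_all _ fun p => ?_)
    by_cases h : p.1 ≤ p.2
    · simp only [hχ, if_pos h, norm_zero]; exact mul_nonneg (abs_nonneg _) (abs_nonneg _)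
    · simp only [hχ, if_neg h, Real.norm_eq_abs, abs_mul]; exact le_rfl
  have intχs : ∀ s : ℝ, Integrable (fun t => χ (s, t)) σ := by
    intro s
    have he : (fun t => χ (s, t)) = (Iio s).indicator (fun t => G k s * F m t) := by
      funext t
      by_cases h : s ≤ t
      · simp [hχ, indicator, h, not_lt.mpr h]
      · simp [hχ, indicator, h, lt_of_not_ge h]
    rw [he]
    exact (hFm.const_mul _).indicator measurableSet_Iio
  have intψs : ∀ s : ℝ, Integrable (fun t => ψ (s, t)) σ := by
    intro s
    have he : (fun t => ψ (s, t)) = (Ici s).indicator (fun t => G k s * F m t) := by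
      funext t
      by_cases h : s ≤ t
      · simp [hψ, indicator, h]
      · simp [hψ, indicator, h]
    rw [he]
    exact (hFm.const_mul _).indicator measurableSet_Ici
  have hsum : ∀ s, (∫ t, χ (s, t) ∂σ) + (∫ t, ψ (s, t) ∂σ) = G k s * G (m+1) x := by
    intro s
    rw [← integral_add (intχs s) (intψs s)]
    have he : (fun t => χ (s, t) + ψ (s, t)) = fun t => G k s * F m t := by
      funext t
      by_cases h : s ≤ t
      · simp [hχ, hψ, h]
      · simp [hχ, hψ, h]
    calc ∫ t, (χ (s, t) + ψ (s, t)) ∂σ = ∫ t, G k s * F m t ∂σ := by rw [he]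
      _ = G k s * ∫ t, F m t ∂σ := integral_const_mul _ _
      _ = G k s * G (m+1) x := by rw [hσ, ← hG m x]
  have I1 : (∫ s, G (m+1) s * G k s ∂ρ) = ∫ s, ∫ t, χ (s, t) ∂σ ∂ρ := by
    have hmem : ∀ᵐ s ∂ρ, s ∈ Ioc (0:ℝ) x := by
      rw [hρ]; exact ae_restrict_mem measurableSet_Ioc
    refine (integral_congr_ae ?_).symm
    filter_upwards [hmem] with s hs
    have he : (fun t => χ (s, t)) = (Iio s).indicator (fun t => G k s * F m t) := by
      funext t
      by_cases h : s ≤ t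
      · simp [hχ, indicator, h, not_lt.mpr h]
      · simp [hχ, indicator, h, lt_of_not_ge h]
    rw [he, integral_indicator measurableSet_Iio, hσ,
      Measure.restrict_restrict measurableSet_Iio]
    have hset : Iio s ∩ Ico (0:ℝ) x = Ico 0 s := by
      ext t
      simp only [mem_inter_iff, mem_Iio, mem_Ico]
      exact ⟨fun h => ⟨h.2.1, h.1⟩, fun h => ⟨h.2, h.1, lt_of_lt_of_le h.2 hs.2⟩⟩
    rw [hset, integral_const_mul, ← hG m s]
    exact mul_comm _ _
  have I2 : (∫ t, F (k+1) t * F m t ∂σ) = ∫ t, ∫ s, ψ (s, t) ∂ρ ∂σ := by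
    have hmem : ∀ᵐ t ∂σ, t ∈ Ico (0:ℝ) x := by
      rw [hσ]; exact ae_restrict_mem measurableSet_Ico
    refine (integral_congr_ae ?_).symm
    filter_upwards [hmem] with t ht
    have he : (fun s => ψ (s, t)) = (Iic t).indicator (fun s => G k s * F m t) := by
      funext s
      by_cases h : s ≤ t
      · simp [hψ, indicator, h]
      · simp [hψ, indicator, h]
    rw [he, integral_indicator measurableSet_Iic, hρ,
      Measure.restrict_restrict measurableSet_Iic]
    have hset : Iic t ∩ Ioc (0:ℝ) x = Ioc 0 t := by
      ext s
      simp only [mem_inter_iff, mem_Iic, mem_Ioc]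
      exact ⟨fun h => ⟨h.2.1, h.1⟩, fun h => ⟨h.2, h.1, h.2.trans ht.2.le⟩⟩
    rw [hset, integral_mul_const, ← hF k t]
  have swap : ∫ t, ∫ s, ψ (s, t) ∂ρ ∂σ = ∫ s, ∫ t, ψ (s, t) ∂σ ∂ρ :=
    integral_integral_swap (f := fun t s => ψ (s, t)) intψ.swap
  calc F (k+1) x * G (m+1) x
      = ∫ s, G k s * G (m+1) x ∂ρ := by rw [hF k x, ← hρ, integral_mul_const]
    _ = ∫ s, ((∫ t, χ (s, t) ∂σ) + (∫ t, ψ (s, t) ∂σ)) ∂ρ :=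
        (integral_congr_ae (ae_of_all _ fun s => (hsum s).symm))
    _ = (∫ s, ∫ t, χ (s, t) ∂σ ∂ρ) + ∫ s, ∫ t, ψ (s, t) ∂σ ∂ρ :=
        integral_add intχ.integral_prod_left intψ.integral_prod_left
    _ = (∫ s, G (m+1) s * G k s ∂ρ) + ∫ t, F (k+1) t * F m t ∂σ := by
        rw [I1, I2, swap]

theorem stmt6 (W : StieltjesFunction ℝ) (V : ℝ → ℝ) (μV : Measure ℝ) [IsFiniteMeasure μV]
    (hW : StrictMonoOn W (Set.Icc 0 1)) (hW0 : W 0 = 0)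
    (hV : StrictMonoOn V (Set.Icc 0 1)) (hV0 : V 0 = 0)
    (hVleft : ∀ y ∈ Set.Ioc (0:ℝ) 1, ContinuousWithinAt V (Set.Iic y) y)
    (hμV : ∀ a b : ℝ, 0 ≤ a → a ≤ b → b ≤ 1 →
      μV (Set.Ico a b) = ENNReal.ofReal (V b - V a))
    (F G : ℕ → ℝ → ℝ)
    (hF0 : ∀ x, F 0 x = 1) (hG0 : ∀ x, G 0 x = 1)
    (hF : ∀ (n : ℕ) (x : ℝ), F (n+1) x = ∫ ξ in Set.Ioc (0:ℝ) x, G n ξ ∂W.measure)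
    (hG : ∀ (n : ℕ) (x : ℝ), G (n+1) x = ∫ ξ in Set.Ico (0:ℝ) x, F n ξ ∂μV) :
    ∀ n : ℕ, 1 ≤ n → ∀ x ∈ Set.Icc (0:ℝ) 1,
      ∑ j ∈ Finset.range (2*n+1),
        (-1:ℝ)^j * (if Even j then F j x else G j x) *
          (if Even (2*n - j) then G (2*n-j) x else F (2*n-j) x) = 0 := by
  intro n hn x hx
  obtain ⟨m, rfl⟩ : ∃ m, n = m + 1 := ⟨n - 1, by omega⟩
  have R := reg W μV F G hF0 hG0 hF hG
  have intG : ∀ j, IntegrableOn (G j) (Ioc 0 x) W.measure := by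
    intro j
    obtain ⟨C, hC0, hC⟩ := (R j).2.2.2.2 1
    refine Integrable.mono' (g := fun _ => C)
      ((integrableOn_const_iff (C := C)).2 (Or.inr (by rw [W.measure_Ioc]; exact ENNReal.ofReal_lt_top)))
      (R j).2.1.aestronglyMeasurable ?_
    filter_upwards [ae_restrict_mem measurableSet_Ioc] with ξ hξ
    rw [Real.norm_eq_abs, abs_of_nonneg ((R j).2.2.2.1 ξ)]
    exact (hC ξ ⟨hξ.1.le, hξ.2.trans hx.2⟩).2
  have intF : ∀ j, IntegrableOn (F j) (Ico 0 x) μV := by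
    intro j
    obtain ⟨C, hC0, hC⟩ := (R j).2.2.2.2 1
    refine Integrable.mono' (g := fun _ => C)
      ((integrableOn_const_iff (C := C)).2 (Or.inr (measure_lt_top μV _)))
      (R j).1.aestronglyMeasurable ?_
    filter_upwards [ae_restrict_mem measurableSet_Ico] with ξ hξ
    rw [Real.norm_eq_abs, abs_of_nonneg ((R j).2.2.1 ξ)]
    exact (hC ξ ⟨hξ.1, hξ.2.le.trans hx.2⟩).1
  have IBP : ∀ k mm : ℕ, F (k+1) x * G (mm+1) x
      = (∫ s in Ioc (0:ℝ) x, G (mm+1) s * G k s ∂W.measure)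
        + ∫ t in Ico (0:ℝ) x, F (k+1) t * F mm t ∂μV :=
    fun k mm => ibp W μV F G hF hG k mm x (R k).2.1 (R mm).1 (intG k) (intF mm)
  -- the commuted-integrand helpers
  have Wcomm : ∀ a b : ℕ, (∫ s in Ioc (0:ℝ) x, G a s * G b s ∂W.measure)
      = ∫ s in Ioc (0:ℝ) x, G b s * G a s ∂W.measure :=
    fun a b => integral_congr_ae (ae_of_all _ fun s => mul_comm _ _)
  have Vcomm : ∀ a b : ℕ, (∫ t in Ico (0:ℝ) x, F a t * F b t ∂μV)
      = ∫ t in Ico (0:ℝ) x, F b t * F a t ∂μV :=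
    fun a b => integral_congr_ae (ae_of_all _ fun t => mul_comm _ _)
  rw [show 2*(m+1)+1 = 2*m+3 by ring]
  refine comb _ (fun p => ∫ t in Ico (0:ℝ) x, F (2*p) t * F (2*m+1-2*p) t ∂μV) m ?_ ?_ ?_
  · -- f 0 = B 0
    beta_reduce
    rw [Nat.sub_zero, if_pos (Even.zero), if_pos ⟨m+1, by ring⟩, pow_zero, hF0,
      Nat.sub_zero]
    have e : ∀ t, F 0 t * F (2*m+1) t = F (2*m+1) t := fun t => by rw [hF0]; ring
    calc (1:ℝ) * 1 * G (2*(m+1)) x = G (2*m+1+1) x := by rw [show 2*(m+1) = 2*m+1+1 by ring]; ring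
      _ = ∫ t in Ico (0:ℝ) x, F (2*m+1) t ∂μV := hG (2*m+1) x
      _ = ∫ t in Ico (0:ℝ) x, F 0 t * F (2*m+1) t ∂μV :=
          (integral_congr_ae (ae_of_all _ fun t => (e t).symm))
      _ = ∫ t in Ico (0:ℝ) x, F (2*0) t * F (2*m+1-2*0) t ∂μV := by norm_num
  · -- pairs
    intro p hp
    obtain ⟨r, rfl⟩ : ∃ r, m = p + r + 1 := ⟨m - p - 1, by omega⟩
    beta_reduce
    have h1 : ¬ Even (2*p+1) := by rw [Nat.even_iff]; omega
    have h2 : Even (2*p+2) := ⟨p+1, by ring⟩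
    have h3 : 2*(p+r+1+1) - (2*p+1) = 2*r+3 := by omega
    have h4 : 2*(p+r+1+1) - (2*p+2) = 2*r+2 := by omega
    have h5 : ¬ Even (2*r+3) := by rw [Nat.even_iff]; omega
    have h6 : Even (2*r+2) := ⟨r+1, by ring⟩
    rw [if_neg h1, h3, if_neg h5, if_pos h2, h4, if_pos h6,
      Odd.neg_one_pow ⟨p, by ring⟩, Even.neg_one_pow h2]
    have IBP1 := IBP (2*r+2) (2*p)
    rw [show 2*r+2+1 = 2*r+3 by omega, show 2*p+1 = 2*p+1 by rfl] at IBP1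
    have IBP2 := IBP (2*p+1) (2*r+1)
    rw [show 2*p+1+1 = 2*p+2 by omega, show 2*r+1+1 = 2*r+2 by omega] at IBP2
    have hB1 : 2*(p+r+1)+1-2*p = 2*r+3 := by omega
    have hB2 : 2*(p+1) = 2*p+2 := by omega
    have hB3 : 2*(p+r+1)+1-2*(p+1) = 2*r+1 := by omega
    rw [hB1, hB3, hB2]
    have hWc := Wcomm (2*p+1) (2*r+2)
    have hVc := Vcomm (2*r+3) (2*p)
    calc (-1) * G (2*p+1) x * F (2*r+3) x + 1 * F (2*p+2) x * G (2*r+2) x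
        = -(F (2*r+3) x * G (2*p+1) x) + F (2*p+2) x * G (2*r+2) x := by ring
      _ = -((∫ s in Ioc (0:ℝ) x, G (2*p+1) s * G (2*r+2) s ∂W.measure)
            + ∫ t in Ico (0:ℝ) x, F (2*r+3) t * F (2*p) t ∂μV)
          + ((∫ s in Ioc (0:ℝ) x, G (2*r+2) s * G (2*p+1) s ∂W.measure)
            + ∫ t in Ico (0:ℝ) x, F (2*p+2) t * F (2*r+1) t ∂μV) := by
          rw [← IBP1, ← IBP2]
      _ = (∫ t in Ico (0:ℝ) x, F (2*p+2) t * F (2*r+1) t ∂μV)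
          - ∫ t in Ico (0:ℝ) x, F (2*p) t * F (2*r+3) t ∂μV := by
          rw [hWc, hVc]; ring
  · -- last pair
    beta_reduce
    have h1 : ¬ Even (2*m+1) := by rw [Nat.even_iff]; omega
    have h2 : Even (2*m+2) := ⟨m+1, by ring⟩
    have h3 : 2*(m+1) - (2*m+1) = 1 := by omega
    have h4 : 2*(m+1) - (2*m+2) = 0 := by omega
    have h5 : ¬ Even (1:ℕ) := by rw [Nat.even_iff]; omega
    rw [if_neg h1, h3, if_neg h5, if_pos h2, h4, if_pos Even.zero,
      Odd.neg_one_pow ⟨m, by ring⟩, Even.neg_one_pow h2, hG0]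
    have IBP1 := IBP 0 (2*m)
    rw [show 2*m+1 = 2*m+1 by rfl] at IBP1
    -- IBP1 : F 1 x * G (2m+1) x = ∫ G(2m+1) * G 0 dW + ∫ F 1 * F (2m) dμV
    have hGW : (∫ s in Ioc (0:ℝ) x, G (2*m+1) s * G 0 s ∂W.measure) = F (2*m+2) x := by
      have e : ∀ s, G (2*m+1) s * G 0 s = G (2*m+1) s := fun s => by rw [hG0]; ring
      calc (∫ s in Ioc (0:ℝ) x, G (2*m+1) s * G 0 s ∂W.measure)
          = ∫ s in Ioc (0:ℝ) x, G (2*m+1) s ∂W.measure :=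
            integral_congr_ae (ae_of_all _ fun s => e s)
        _ = F (2*m+1+1) x := (hF (2*m+1) x).symm
        _ = F (2*m+2) x := by norm_num
    have hB : 2*m+1-2*m = 1 := by omega
    rw [hB]
    have hVc := Vcomm 1 (2*m)
    calc (-1) * G (2*m+1) x * F 1 x + 1 * F (2*m+2) x * 1
        = -(F (0+1) x * G (2*m+1) x) + F (2*m+2) x := by norm_num; ring
      _ = -((∫ s in Ioc (0:ℝ) x, G (2*m+1) s * G 0 s ∂W.measure)
            + ∫ t in Ico (0:ℝ) x, F (0+1) t * F (2*m) t ∂μV) + F (2*m+2) x := by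
          rw [← IBP1]
      _ = -(∫ t in Ico (0:ℝ) x, F (2*m) t * F 1 t ∂μV) := by
          rw [hGW]
          have : (∫ t in Ico (0:ℝ) x, F (0+1) t * F (2*m) t ∂μV)
              = ∫ t in Ico (0:ℝ) x, F 1 t * F (2*m) t ∂μV := by norm_num
          rw [this, hVc]; ring
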